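/- Let λ ∈ ℝ with λ ≠ 0 and let v₀,…,v₈ be the D2Q9 velocities, with weights ω₀ = 4/9, ωⱼ = 1/9 for 1 ≤ j ≤ 4, ωⱼ = 1/36 for 5 ≤ j ≤ 8, and sound speed c₀ with c₀² = λ²/3. Set d₀ = −1/4, d_j = 1/2 for 1 ≤ j ≤ 4, d_j = −1 for 5 ≤ j ≤ 8. For every ρ ∈ ℝ and every u = (uˣ, uʸ) ∈ ℝ², the product (fourth order) equilibrium f_j^eq = ρ ωⱼ ( 1 + (u·vⱼ)/c₀² + (u·vⱼ)²/(2c₀⁴) − |u|²/(2c₀²) + (u·vⱼ)³/(6c₀⁶) − |u|²(u·vⱼ)/(2c₀⁴) + d_j (uˣ)²(uʸ)²/c₀⁴ ), 0 ≤ j ≤ 8, has density ρ and momentum ρu: Σⱼ f_j^eq = ρ and Σⱼ vⱼ f_j^eq = ρ u. -/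
import Mathlib


/-- x-components of the D2Q9 velocities. -/
def vx (lam : ℝ) : Fin 9 → ℝ := ![0, lam, 0, -lam, 0, lam, -lam, -lam, lam]

/-- y-components of the D2Q9 velocities. -/
def vy (lam : ℝ) : Fin 9 → ℝ := ![0, 0, lam, 0, -lam, lam, lam, -lam, -lam]

/-- The D2Q9 weights. -/
noncomputable def w : Fin 9 → ℝ :=
  ![4/9, 1/9, 1/9, 1/9, 1/9, 1/36, 1/36, 1/36, 1/36]

/-- The coefficients `d_j` of the product equilibrium. -/
noncomputable def dcoef : Fin 9 → ℝ :=
  ![-1/4, 1/2, 1/2, 1/2, 1/2, -1, -1, -1, -1]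

set_option maxHeartbeats 2000000 in
/-- The product (fourth order) equilibrium of the D2Q9 cascaded scheme has
density `ρ` and momentum `ρ u`. -/
theorem stmt_13 (lam : ℝ) (hlam : lam ≠ 0) (c0 : ℝ) (hc0 : c0 ^ 2 = lam ^ 2 / 3)
    (ρ : ℝ) (u : ℝ × ℝ)
    (feq : Fin 9 → ℝ)
    (hfeq : ∀ j, feq j = ρ * w j *
      (1 + (u.1 * vx lam j + u.2 * vy lam j) / c0 ^ 2
        + (u.1 * vx lam j + u.2 * vy lam j) ^ 2 / (2 * c0 ^ 4)
        - (u.1 ^ 2 + u.2 ^ 2) / (2 * c0 ^ 2)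
        + (u.1 * vx lam j + u.2 * vy lam j) ^ 3 / (6 * c0 ^ 6)
        - (u.1 ^ 2 + u.2 ^ 2) * (u.1 * vx lam j + u.2 * vy lam j) / (2 * c0 ^ 4)
        + dcoef j * u.1 ^ 2 * u.2 ^ 2 / c0 ^ 4)) :
    (∑ j, feq j = ρ) ∧
    (∑ j, vx lam j * feq j = ρ * u.1) ∧
    (∑ j, vy lam j * feq j = ρ * u.2) := by
  have h2 : c0 ^ 2 = lam ^ 2 / 3 := hc0
  have h4 : c0 ^ 4 = lam ^ 4 / 9 := by
    have : c0 ^ 4 = (c0 ^ 2) ^ 2 := by ring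
    rw [this, h2]; ring
  have h6 : c0 ^ 6 = lam ^ 6 / 27 := by
    have : c0 ^ 6 = (c0 ^ 2) ^ 3 := by ring
    rw [this, h2]; ring
  refine ⟨?_, ?_, ?_⟩ <;>
  · simp only [Fin.sum_univ_succ, Finset.sum_empty, Fin.sum_univ_zero, hfeq, vx, vy, w, dcoef,
      Matrix.cons_val_zero, Matrix.cons_val_one, Matrix.head_cons, Matrix.cons_val_succ, h2, h4, h6]
    field_simp
    ring
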